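/- (Bartoszyński–Shelah) Let E be the ideal of subsets of ℝ generated by the F_σ Lebesgue-measure-zero sets, M the meager ideal on ℝ, and N the Lebesgue null ideal on ℝ. Then min{𝔟, non(N)} ≤ non(E) ≤ min{non(M), non(N)} and max{cov(M), cov(N)} ≤ cov(E) ≤ max{𝔡, cov(N)}, where 𝔟 and 𝔡 are the unbounding and dominating numbers of ⟨ω^ω, ≤*⟩. -/

import Mathlib

open Cardinal

universe u v

/-- A set `F ⊆ X` is unbounded in the relational system `⟨X, Y, r⟩`:
no `y ∈ Y` satisfies `r x y` for all `x ∈ F`. -/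
def RUnbounded {X : Type u} {Y : Type v} (r : X → Y → Prop) (F : Set X) : Prop :=
  ¬ ∃ y : Y, ∀ x ∈ F, r x y

/-- A set `E ⊆ Y` is dominating in the relational system `⟨X, Y, r⟩`. -/
def RDominating {X : Type u} {Y : Type v} (r : X → Y → Prop) (E : Set Y) : Prop :=
  ∀ x : X, ∃ y ∈ E, r x y

/-- The unbounding number `𝔟(R)` of the relational system `⟨X, Y, r⟩`. -/
noncomputable def bNum {X : Type u} {Y : Type v} (r : X → Y → Prop) : Cardinal.{u} :=
  sInf { c | ∃ F : Set X, RUnbounded r F ∧ c = #F }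

/-- The dominating number `𝔡(R)` of the relational system `⟨X, Y, r⟩`. -/
noncomputable def dNum {X : Type u} {Y : Type v} (r : X → Y → Prop) : Cardinal.{v} :=
  sInf { c | ∃ E : Set Y, RDominating r E ∧ c = #E }

/-- Tukey connection: `R ≼_T R'`. -/
def TukeyLE {X Y X' Y' : Type*} (r : X → Y → Prop) (r' : X' → Y' → Prop) : Prop :=
  ∃ (f : X → X') (g : Y' → Y), ∀ x y', r' (f x) y' → r x (g y')

/-- `I` is an ideal of subsets of `X`. -/
def IsIdeal {X : Type u} (I : Set (Set X)) : Prop :=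
  ∅ ∈ I ∧ (∀ A ∈ I, ∀ B ⊆ A, B ∈ I) ∧ (∀ A ∈ I, ∀ B ∈ I, A ∪ B ∈ I)

/-- `add(I)`, the additivity of `I`. -/
noncomputable def addIdeal {X : Type u} (I : Set (Set X)) : Cardinal.{u} :=
  sInf { c | ∃ F ⊆ I, ⋃₀ F ∉ I ∧ c = #F }

/-- `cof(I)`, the cofinality of `I`. -/
noncomputable def cofIdeal {X : Type u} (I : Set (Set X)) : Cardinal.{u} :=
  sInf { c | ∃ D ⊆ I, (∀ A ∈ I, ∃ B ∈ D, A ⊆ B) ∧ c = #D }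

/-- `non(I)`, the uniformity of `I`. -/
noncomputable def nonIdeal {X : Type u} (I : Set (Set X)) : Cardinal.{u} :=
  sInf { c | ∃ F : Set X, F ∉ I ∧ c = #F }

/-- `cov(I)`, the covering number of `I`. -/
noncomputable def covIdeal {X : Type u} (I : Set (Set X)) : Cardinal.{u} :=
  sInf { c | ∃ C ⊆ I, ⋃₀ C = Set.univ ∧ c = #C }

/-- The ideal `E` generated by the `F_σ` Lebesgue-measure-zero subsets of `ℝ`:
`A ∈ E` iff `A` is contained in an `F_σ` set of Lebesgue measure zero. -/
def idealE : Set (Set ℝ) :=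
  { A | ∃ B : Set ℝ, (∃ F : ℕ → Set ℝ, (∀ n, IsClosed (F n)) ∧ B = ⋃ n, F n) ∧
      MeasureTheory.volume B = 0 ∧ A ⊆ B }

/-- The ideal of meager subsets of `ℝ`. -/
def meagerSetsR : Set (Set ℝ) :=
  { A | IsMeagre A }

/-- The ideal of Lebesgue-null subsets of `ℝ`. -/
def nullSets : Set (Set ℝ) :=
  { A | MeasureTheory.volume A = 0 }

/-- The eventual-domination relation `x ≤* y` on `ω^ω`. -/
def DomRel : (ℕ → ℕ) → (ℕ → ℕ) → Prop :=
  fun x y => ∃ m : ℕ, ∀ n ≥ m, x n ≤ y n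

open MeasureTheory Set ENNReal

noncomputable def rseq : ℕ → ℚ × ℚ := fun n => (Denumerable.eqv (ℚ × ℚ)).symm n

noncomputable def Jset (k : ℕ) : Set ℝ := Set.Ioo ((rseq k).1 : ℝ) ((rseq k).2 : ℝ)

noncomputable def Kset (k : ℕ) : Set ℝ := Set.Icc ((rseq k).1 : ℝ) ((rseq k).2 : ℝ)

lemma Jset_subset_Kset (k : ℕ) : Jset k ⊆ Kset k := Set.Ioo_subset_Icc_self

lemma Kset_closed (k : ℕ) : IsClosed (Kset k) := isClosed_Icc

lemma KJ_null : volume (⋃ k, (Kset k \ Jset k)) = 0 := by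
  refine measure_iUnion_null fun k => measure_mono_null ?_
    ((show ({((rseq k).1 : ℝ), ((rseq k).2 : ℝ)} : Set ℝ).Finite from (Set.finite_singleton _).insert _).measure_zero volume)
  intro x hx
  rcases hx with ⟨h1, h2⟩
  simp only [Jset, Kset, Set.mem_Ioo, Set.mem_Icc, not_and_or, not_lt] at h1 h2
  rcases h2 with h | h
  · exact Or.inl (le_antisymm h h1.1)
  · exact Or.inr (le_antisymm h1.2 h)

lemma exists_Jset {U : Set ℝ} (hU : IsOpen U) {x : ℝ} (hx : x ∈ U) :
    ∃ k, x ∈ Jset k ∧ Jset k ⊆ U := by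
  obtain ⟨ε, hε, hball⟩ := Metric.isOpen_iff.mp hU x hx
  obtain ⟨a, ha1, ha2⟩ := exists_rat_btwn (show x - ε < x by linarith)
  obtain ⟨b, hb1, hb2⟩ := exists_rat_btwn (show x < x + ε by linarith)
  refine ⟨Denumerable.eqv (ℚ × ℚ) (a, b), ?_, ?_⟩
  · simp only [Jset, rseq, Equiv.symm_apply_apply]
    exact ⟨ha2, hb1⟩
  · simp only [Jset, rseq, Equiv.symm_apply_apply]
    refine le_trans ?_ hball
    rw [Real.ball_eq_Ioo]
    exact Set.Ioo_subset_Ioo ha1.le hb2.le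

lemma ennreal_eq_zero_of_le_inv {a : ℝ≥0∞} (h : ∀ n : ℕ, a ≤ ((n : ℝ≥0∞) + 1)⁻¹) : a = 0 := by
  by_contra h0
  obtain ⟨n, hn⟩ := ENNReal.exists_inv_nat_lt h0
  have h2 : a ≤ ((n : ℝ≥0∞))⁻¹ := by
    cases n with
    | zero => simp
    | succ k =>
      have := h k
      refine this.trans (le_of_eq ?_)
      congr 1
      push_cast
      ring
  exact absurd (lt_of_lt_of_le hn h2) (lt_irrefl _)

lemma core (A : Set ℝ) (hA : volume A = 0) :
    ∃ (P : (ℕ → ℕ) → Set ℝ) (f : ℝ → ℕ → ℕ),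
      (∀ g, P g ∈ idealE) ∧ ∀ g x, x ∈ A → DomRel (f x) g → x ∈ P g := by
  have hU : ∀ n : ℕ, ∃ U : Set ℝ, A ⊆ U ∧ IsOpen U ∧ volume U < ((n : ℝ≥0∞) + 1)⁻¹ := by
    intro n
    have hlt : volume A < ((n : ℝ≥0∞) + 1)⁻¹ := by
      rw [hA]
      exact ENNReal.inv_pos.mpr (by simp)
    obtain ⟨U, hAU, hUo, hUlt⟩ := Set.exists_isOpen_lt_of_lt A _ hlt
    exact ⟨U, hAU, hUo, hUlt⟩
  choose U hAU hUo hUm using hU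
  classical
  set f : ℝ → ℕ → ℕ := fun x n => if h : x ∈ U n then (exists_Jset (hUo n) h).choose else 0
    with hfdef
  set C : (ℕ → ℕ) → ℕ → Set ℝ :=
    fun g n => ⋃ k ∈ {k : ℕ | k ≤ g n ∧ Jset k ⊆ U n}, Kset k with hCdef
  set T : (ℕ → ℕ) → ℕ → Set ℝ := fun g m => ⋂ n, ⋂ (_ : m ≤ n), C g n with hTdef
  have hTclosed : ∀ g m, IsClosed (T g m) := by
    intro g m
    refine isClosed_iInter fun n => isClosed_iInter fun _ => ?_
    exact Set.Finite.isClosed_biUnion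
      ((Set.finite_le_nat (g n)).subset fun k hk => hk.1) fun k _ => Kset_closed k
  have hCle : ∀ g n, volume (C g n) ≤ volume (U n) := by
    intro g n
    have hsub : C g n ⊆ U n ∪ ⋃ k, (Kset k \ Jset k) := by
      intro x hx
      simp only [hCdef, Set.mem_iUnion, Set.mem_setOf_eq] at hx
      obtain ⟨k, ⟨_, hkU⟩, hxk⟩ := hx
      by_cases hxJ : x ∈ Jset k
      · exact Or.inl (hkU hxJ)
      · exact Or.inr (Set.mem_iUnion.mpr ⟨k, hxk, hxJ⟩)
    calc volume (C g n) ≤ volume (U n ∪ ⋃ k, (Kset k \ Jset k)) := measure_mono hsub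
      _ ≤ volume (U n) + volume (⋃ k, (Kset k \ Jset k)) := measure_union_le _ _
      _ = volume (U n) := by rw [KJ_null, add_zero]
  have hTnull : ∀ g m, volume (T g m) = 0 := by
    intro g m
    refine ennreal_eq_zero_of_le_inv fun n => ?_
    have hsub : T g m ⊆ C g (m + n) := by
      intro x hx
      simp only [hTdef, Set.mem_iInter] at hx
      exact hx (m + n) (Nat.le_add_right m n)
    refine (measure_mono hsub).trans (((hCle g (m + n)).trans (hUm (m + n)).le).trans ?_)
    rw [ENNReal.inv_le_inv]
    have hc : (n : ℝ≥0∞) ≤ ((m + n : ℕ) : ℝ≥0∞) := by exact_mod_cast Nat.le_add_left n m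
    exact add_le_add hc le_rfl
  refine ⟨fun g => ⋃ m, T g m, f, ?_, ?_⟩
  · intro g
    exact ⟨⋃ m, T g m, ⟨fun m => T g m, hTclosed g, rfl⟩,
      measure_iUnion_null (hTnull g), subset_rfl⟩
  · rintro g x hxA ⟨m, hm⟩
    refine Set.mem_iUnion.mpr ⟨m, ?_⟩
    simp only [hTdef, Set.mem_iInter]
    intro n hn
    have hxU : x ∈ U n := hAU n hxA
    have hspec := (exists_Jset (hUo n) hxU).choose_spec
    have hfx : f x n = (exists_Jset (hUo n) hxU).choose := by
      simp only [hfdef, dif_pos hxU]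
    simp only [hCdef, Set.mem_iUnion, Set.mem_setOf_eq]
    refine ⟨f x n, ⟨hm n hn, ?_⟩, ?_⟩
    · rw [hfx]; exact hspec.2
    · rw [hfx]; exact Jset_subset_Kset _ hspec.1



lemma idealE_mono {A B : Set ℝ} (h : A ⊆ B) (hB : B ∈ idealE) : A ∈ idealE := by
  obtain ⟨B', h1, h2, h3⟩ := hB
  exact ⟨B', h1, h2, h.trans h3⟩

lemma idealE_subset_null : idealE ⊆ nullSets := by
  rintro A ⟨B, _, h0, hAB⟩
  exact measure_mono_null hAB h0

lemma nwd_meagre {s : Set ℝ} (h : IsNowhereDense s) : IsMeagre s :=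
  isMeagre_iff_countable_union_isNowhereDense.mpr
    ⟨{s}, by simpa using h, countable_singleton _, by simp⟩

lemma idealE_subset_meager : idealE ⊆ meagerSetsR := by
  rintro A ⟨B, ⟨F, hFc, rfl⟩, h0, hAB⟩
  refine IsMeagre.mono hAB (isMeagre_iUnion fun n => ?_)
  have hnull : volume (F n) = 0 := measure_mono_null (Set.subset_iUnion F n) h0
  have hint : interior (F n) = ∅ := by
    by_contra h
    obtain ⟨x, hx⟩ := Set.nonempty_iff_ne_empty.mpr h
    have hpos := IsOpen.measure_pos volume isOpen_interior ⟨x, hx⟩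
    have hle := measure_mono_null interior_subset hnull
    exact absurd hle hpos.ne'
  exact nwd_meagre ((hFc n).isNowhereDense_iff.mpr hint)

lemma singleton_mem_idealE (x : ℝ) : ({x} : Set ℝ) ∈ idealE :=
  ⟨{x}, ⟨fun _ => {x}, fun _ => isClosed_singleton, by rw [Set.iUnion_const]⟩,
    Real.volume_singleton, subset_rfl⟩

lemma univ_not_null : (Set.univ : Set ℝ) ∉ nullSets := by
  simp [nullSets, Real.volume_univ]

lemma univ_not_idealE : (Set.univ : Set ℝ) ∉ idealE :=
  fun h => univ_not_null (idealE_subset_null h)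

lemma univ_not_meagre : (Set.univ : Set ℝ) ∉ meagerSetsR := by
  intro h
  have hd : Dense ((Set.univ : Set ℝ)ᶜ) := dense_of_mem_residual h
  rw [Set.compl_univ] at hd
  exact Set.not_nonempty_empty hd.nonempty

lemma singletons_cover : ⋃₀ (Set.range fun x : ℝ => ({x} : Set ℝ)) = Set.univ := by
  rw [Set.sUnion_range, Set.iUnion_of_singleton]

/-- Bartoszyński–Shelah.
`min{𝔟, non(N)} ≤ non(E) ≤ min{non(M), non(N)}` and
`max{cov(M), cov(N)} ≤ cov(E) ≤ max{𝔡, cov(N)}`. -/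
theorem stmt17 :
    min (bNum DomRel) (nonIdeal nullSets) ≤ nonIdeal idealE ∧
    nonIdeal idealE ≤ min (nonIdeal meagerSetsR) (nonIdeal nullSets) ∧
    max (covIdeal meagerSetsR) (covIdeal nullSets) ≤ covIdeal idealE ∧
    covIdeal idealE ≤ max (dNum DomRel) (covIdeal nullSets) := by
  constructor
  · -- min (𝔟, non N) ≤ non E
    refine le_csInf ⟨#(Set.univ : Set ℝ), Set.univ, univ_not_idealE, rfl⟩ ?_
    rintro c ⟨F, hF, rfl⟩
    by_cases hFnull : MeasureTheory.volume F = 0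
    · obtain ⟨P, f, hPE, hf⟩ := core F hFnull
      refine le_trans (min_le_left _ _) ?_
      refine le_trans (csInf_le (OrderBot.bddBelow _) ⟨f '' F, ?_, rfl⟩) Cardinal.mk_image_le
      rintro ⟨g, hg⟩
      refine hF (idealE_mono (fun x hx => ?_) (hPE g))
      exact hf g x hx (hg (f x) (Set.mem_image_of_mem f hx))
    · exact le_trans (min_le_right _ _) (csInf_le (OrderBot.bddBelow _) ⟨F, hFnull, rfl⟩)
  constructor
  · -- non E ≤ min (non M) (non N)
    refine le_min ?_ ?_
    · refine csInf_le_csInf (OrderBot.bddBelow _)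
        ⟨#(Set.univ : Set ℝ), Set.univ, univ_not_meagre, rfl⟩ ?_
      rintro c ⟨F, hF, rfl⟩
      exact ⟨F, fun h => hF (idealE_subset_meager h), rfl⟩
    · refine csInf_le_csInf (OrderBot.bddBelow _)
        ⟨#(Set.univ : Set ℝ), Set.univ, univ_not_null, rfl⟩ ?_
      rintro c ⟨F, hF, rfl⟩
      exact ⟨F, fun h => hF (idealE_subset_null h), rfl⟩
  have hEcovne : {c | ∃ C ⊆ idealE, ⋃₀ C = Set.univ ∧ c = #C}.Nonempty :=
    ⟨_, Set.range fun x : ℝ => ({x} : Set ℝ),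
      by rintro _ ⟨x, rfl⟩; exact singleton_mem_idealE x, singletons_cover, rfl⟩
  have hNcovne : {c | ∃ C ⊆ nullSets, ⋃₀ C = Set.univ ∧ c = #C}.Nonempty :=
    ⟨_, Set.range fun x : ℝ => ({x} : Set ℝ),
      by rintro _ ⟨x, rfl⟩; exact idealE_subset_null (singleton_mem_idealE x),
      singletons_cover, rfl⟩
  constructor
  · -- max (cov M) (cov N) ≤ cov E
    refine max_le ?_ ?_
    · refine csInf_le_csInf (OrderBot.bddBelow _) hEcovne ?_
      rintro c ⟨C, hC, hcov, rfl⟩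
      exact ⟨C, fun A hA => idealE_subset_meager (hC hA), hcov, rfl⟩
    · refine csInf_le_csInf (OrderBot.bddBelow _) hEcovne ?_
      rintro c ⟨C, hC, hcov, rfl⟩
      exact ⟨C, fun A hA => idealE_subset_null (hC hA), hcov, rfl⟩
  · -- cov E ≤ max (𝔡) (cov N)
    obtain ⟨C, hCN, hCcov, hCeq⟩ :
        covIdeal nullSets ∈ {c | ∃ C ⊆ nullSets, ⋃₀ C = Set.univ ∧ c = #C} :=
      csInf_mem hNcovne
    have hDne : {c | ∃ E : Set (ℕ → ℕ), RDominating DomRel E ∧ c = #E}.Nonempty :=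
      ⟨_, Set.univ, fun x => ⟨x, Set.mem_univ x, ⟨0, fun n _ => le_refl _⟩⟩, rfl⟩
    obtain ⟨D, hD, hDeq⟩ :
        dNum DomRel ∈ {c | ∃ E : Set (ℕ → ℕ), RDominating DomRel E ∧ c = #E} :=
      csInf_mem hDne
    choose P f hPE hf using fun A : C => core A.1 (hCN A.2)
    set Φ : C × D → Set ℝ := fun p => P p.1 p.2.1 with hΦ
    have hcovΦ : ⋃₀ (Set.range Φ) = Set.univ := by
      ext x
      simp only [Set.mem_univ, iff_true, Set.mem_sUnion, Set.mem_range]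
      have hx : x ∈ ⋃₀ C := by rw [hCcov]; trivial
      obtain ⟨A, hAC, hxA⟩ := hx
      obtain ⟨g, hgD, hdom⟩ := hD (f ⟨A, hAC⟩ x)
      exact ⟨Φ (⟨A, hAC⟩, ⟨g, hgD⟩), ⟨_, rfl⟩, hf ⟨A, hAC⟩ g x hxA hdom⟩
    have hsubΦ : Set.range Φ ⊆ idealE := by
      rintro _ ⟨p, rfl⟩
      exact hPE p.1 p.2.1
    have h1 : covIdeal idealE ≤ #(Set.range Φ) :=
      csInf_le (OrderBot.bddBelow _) ⟨Set.range Φ, hsubΦ, hcovΦ, rfl⟩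
    have h2 : #(Set.range Φ) ≤ #C * #D := by
      refine le_trans Cardinal.mk_range_le ?_
      rw [Cardinal.mk_prod, Cardinal.lift_id, Cardinal.lift_id]
    have haleph : Cardinal.aleph0 ≤ covIdeal nullSets := by
      refine le_csInf hNcovne ?_
      rintro c ⟨C', hC', hcov', rfl⟩
      by_contra hlt
      push_neg at hlt
      have hfin : C'.Finite := Cardinal.lt_aleph0_iff_set_finite.mp hlt
      have : Countable C' := hfin.countable
      have hnull : MeasureTheory.volume (⋃₀ C') = 0 := by
        rw [Set.sUnion_eq_iUnion]
        exact measure_iUnion_null fun s => hC' s.2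
      rw [hcov'] at hnull
      exact univ_not_null hnull
    refine h1.trans (h2.trans ?_)
    rw [hCeq, hDeq]
    rw [hCeq] at haleph
    refine (Cardinal.mul_le_max _ _).trans ?_
    refine sup_le (sup_le (le_max_right _ _) (le_max_left _ _)) ?_
    exact haleph.trans (le_max_right _ _)
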